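/- For all real t, x, y with |t| < 1, |x| < 2 and |y| < 2, the series Σ_{n=0}^∞ tⁿ·U_n(x/2)·U_n(y/2) converges and equals (1 − t²) / ((1 − t²)² − t(1 + t²)xy + t²(x² + y²)). -/

import Mathlib

noncomputable section

open Finset

/-- The q-integer `[n]_q = 1 + q + ⋯ + q^{n-1}`. -/
def qInt (q : ℝ) (n : ℕ) : ℝ := ∑ i ∈ Finset.range n, q ^ i

/-- The q-factorial `[n]_q!`. -/
def qFact (q : ℝ) (n : ℕ) : ℝ := ∏ j ∈ Finset.range n, qInt q (j + 1)

/-- The q-binomial coefficient. -/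
def qBinom (q : ℝ) (n k : ℕ) : ℝ :=
  if k ≤ n then qFact q n / (qFact q (n - k) * qFact q k) else 0

/-- The finite q-Pochhammer symbol `(a;q)_n`. -/
def qPoch (a q : ℝ) (n : ℕ) : ℝ := ∏ j ∈ Finset.range n, (1 - a * q ^ j)

/-- The infinite q-Pochhammer symbol `(a;q)_∞`. -/
def qPochInf (a q : ℝ) : ℝ := ∏' j : ℕ, (1 - a * q ^ j)

/-- The q-Hermite polynomials `H_n(x|q)`. -/
def qHermite (q : ℝ) : ℕ → ℝ → ℝ
  | 0, _ => 1
  | 1, x => x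
  | n + 2, x => x * qHermite q (n + 1) x - qInt q (n + 1) * qHermite q n x

/-- The rescaled q-ultraspherical polynomials `R_n(x|β,q)`. -/
def qUltra (q β : ℝ) : ℕ → ℝ → ℝ
  | 0, _ => 1
  | 1, x => (1 - β) * x
  | n + 2, x => (1 - β * q ^ (n + 1)) * x * qUltra q β (n + 1) x
      - (1 - β ^ 2 * q ^ n) * qInt q (n + 1) * qUltra q β n x

/-- The Al-Salam–Chihara polynomials `P_n(x|y,ρ,q)`. -/
def ASC (q y ρ : ℝ) : ℕ → ℝ → ℝ
  | 0, _ => 1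
  | 1, x => x - ρ * y
  | n + 2, x => (x - ρ * y * q ^ (n + 1)) * ASC q y ρ (n + 1) x
      - (1 - ρ ^ 2 * q ^ n) * qInt q (n + 1) * ASC q y ρ n x

/-- The polynomials `B_n(y|q)` (q⁻¹-Hermite related). -/
def qB (q : ℝ) : ℕ → ℝ → ℝ
  | 0, _ => 1
  | 1, y => -y
  | n + 2, y => -q ^ (n + 1) * y * qB q (n + 1) y + q ^ n * qInt q (n + 1) * qB q n y

/-- The big q-Hermite polynomials `H_n(x|a,q)`. -/
def bigqHermite (q a : ℝ) : ℕ → ℝ → ℝ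
  | 0, _ => 1
  | 1, x => x - a
  | n + 2, x => (x - a * q ^ (n + 1)) * bigqHermite q a (n + 1) x
      - qInt q (n + 1) * bigqHermite q a n x

/-- The probabilistic Hermite polynomials `H_n(x)`. -/
def probHermite : ℕ → ℝ → ℝ
  | 0, _ => 1
  | 1, x => x
  | n + 2, x => x * probHermite (n + 1) x - (n + 1) * probHermite n x

/-- The probabilistic Hermite polynomials on ℂ. -/
def probHermiteC : ℕ → ℂ → ℂ
  | 0, _ => 1
  | 1, x => x
  | n + 2, x => x * probHermiteC (n + 1) x - (n + 1) * probHermiteC n x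

/-- The Chebyshev polynomials of the second kind. -/
def chebU : ℕ → ℝ → ℝ
  | 0, _ => 1
  | 1, x => 2 * x
  | n + 2, x => 2 * x * chebU (n + 1) x - chebU n x

/-- The Chebyshev polynomials of the first kind. -/
def chebT : ℕ → ℝ → ℝ
  | 0, _ => 1
  | 1, x => x
  | n + 2, x => 2 * x * chebT (n + 1) x - chebT n x

/-- `W_k(x,y,t|q)`. -/
def Wk (q x y t : ℝ) (k : ℕ) : ℝ :=
  (1 - t ^ 2 * q ^ (2 * k)) ^ 2 - (1 - q) * x * y * t * q ^ k * (1 + t ^ 2 * q ^ (2 * k))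
    + (1 - q) * t ^ 2 * q ^ (2 * k) * (x ^ 2 + y ^ 2)

/-- `V_k(x,a|q)`. -/
def Vk (q x a : ℝ) (k : ℕ) : ℝ :=
  1 - (1 - q) * a * x * q ^ k + (1 - q) * a ^ 2 * q ^ (2 * k)

/-- `L_k(x,a|q)`. -/
def Lk (q x a : ℝ) (k : ℕ) : ℝ :=
  (1 + a * q ^ k) ^ 2 - (1 - q) * x ^ 2 * a ^ 2 * q ^ k

/-- The support interval `S(q) = [-2/√(1-q), 2/√(1-q)]` for `|q| < 1`. -/
def Sq (q : ℝ) : Set ℝ := Set.Icc (-(2 / Real.sqrt (1 - q))) (2 / Real.sqrt (1 - q))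

/-- shifted Chebyshev U, with `chebUm a 0 = 0`. -/
def chebUm (a : ℝ) : ℕ → ℝ
  | 0 => 0
  | n + 1 => chebU n a

lemma chebU_rec (a : ℝ) (n : ℕ) : chebU (n+2) a = 2*a*chebU (n+1) a - chebU n a := rfl

lemma chebU_sq_rel (a : ℝ) : ∀ n : ℕ,
    chebU (n+1) a ^ 2 + chebU n a ^ 2 - 2*a*chebU (n+1) a*chebU n a = 1 := by
  intro n
  induction n with
  | zero => simp [chebU]; ring
  | succ m ih =>
    rw [chebU_rec]
    linear_combination ih

lemma chebU_sq_le (a : ℝ) (ha : |a| < 1) (n : ℕ) : chebU n a ^ 2 ≤ 1/(1-|a|) := by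
  have h1 : 0 < 1 - |a| := by linarith
  rw [le_div_iff₀ h1]
  have h2 := chebU_sq_rel a n
  have h3 : a * (chebU (n+1) a * chebU n a) ≤ |a| * |chebU (n+1) a * chebU n a| := by
    calc a * (chebU (n+1) a * chebU n a) ≤ |a * (chebU (n+1) a * chebU n a)| := le_abs_self _
    _ = |a| * |chebU (n+1) a * chebU n a| := abs_mul _ _
  have h4 : |chebU (n+1) a * chebU n a| ≤ (chebU (n+1) a ^2 + chebU n a ^2)/2 := by
    rw [abs_mul]
    nlinarith [sq_nonneg (|chebU (n+1) a| - |chebU n a|), sq_abs (chebU (n+1) a), sq_abs (chebU n a)]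
  nlinarith [sq_nonneg (chebU (n+1) a), abs_nonneg a]

lemma chebU_abs_le (a : ℝ) (ha : |a| < 1) (n : ℕ) :
    |chebU n a| ≤ Real.sqrt (1/(1-|a|)) :=
  Real.abs_le_sqrt (chebU_sq_le a ha n)

lemma chebUm_abs_le (a : ℝ) (ha : |a| < 1) (n : ℕ) :
    |chebUm a n| ≤ Real.sqrt (1/(1-|a|)) := by
  cases n with
  | zero => simpa [chebUm] using Real.sqrt_nonneg (1/(1-|a|))
  | succ m => exact chebU_abs_le a ha m

noncomputable def kerE (t x y : ℝ) (n : ℕ) : ℝ :=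
  t^n * ((1-t^2) * chebU n (x/2) * chebU n (y/2)
       + t*(t*y - x) * chebU n (x/2) * chebUm (y/2) n
       + t*(t*x - y) * chebUm (x/2) n * chebU n (y/2)
       + t*(1-t^2) * chebUm (x/2) n * chebUm (y/2) n)

lemma kerE_step (t x y : ℝ) (n : ℕ) :
    kerE t x y n - kerE t x y (n+1)
      = ((1-t^2)^2 - t*(1+t^2)*x*y + t^2*(x^2+y^2)) * (t^n * chebU n (x/2) * chebU n (y/2)) := by
  cases n with
  | zero => simp only [kerE, chebU, chebUm]; ring
  | succ m =>
    simp only [kerE, chebUm, chebU_rec]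
    ring

lemma denom_pos' (s u v : ℝ) (hs0 : 0 ≤ s) (hs : s < 1) (hu0 : 0 ≤ u) (hu : u < 2)
    (hv0 : 0 ≤ v) (hv : v < 2) :
    0 < (1-s^2)^2 - s*(1+s^2)*u*v + s^2*(u^2+v^2) := by
  have hu2 : u^2 < 4 := by nlinarith
  have hv2 : v^2 < 4 := by nlinarith
  have hAmB : 0 < (1 - s*u*v/2 + s^2) - s*(8-u^2-v^2)/4 := by
    nlinarith [sq_nonneg (1-s), mul_nonneg hs0 (sq_nonneg (u-v))]
  have hB0 : 0 ≤ s*(8-u^2-v^2)/4 := by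
    have := mul_nonneg hs0 (by linarith : (0:ℝ) ≤ 8-u^2-v^2); linarith
  have hsq : s^2*(4-u^2)*(4-v^2)/4 ≤ (s*(8-u^2-v^2)/4)^2 := by
    nlinarith [mul_nonneg (sq_nonneg s) (sq_nonneg (u^2 - v^2))]
  nlinarith [mul_pos hAmB (by linarith : (0:ℝ) < (1 - s*u*v/2 + s^2) + s*(8-u^2-v^2)/4)]

lemma denom_pos (t x y : ℝ) (ht : |t| < 1) (hx : |x| < 2) (hy : |y| < 2) :
    0 < (1-t^2)^2 - t*(1+t^2)*x*y + t^2*(x^2+y^2) := by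
  have h1 : t*(1+t^2)*x*y ≤ |t| * (1+|t|^2) * |x| * |y| := by
    calc t*(1+t^2)*x*y ≤ |t*(1+t^2)*x*y| := le_abs_self _
    _ = |t| * (1+|t|^2) * |x| * |y| := by
        rw [abs_mul, abs_mul, abs_mul, abs_of_pos (by positivity : (0:ℝ) < 1 + t^2), sq_abs]
  have h2 := denom_pos' |t| |x| |y| (abs_nonneg t) ht (abs_nonneg x) hx (abs_nonneg y) hy
  have hx2 : x^2 = |x|^2 := (sq_abs x).symm
  have hy2 : y^2 = |y|^2 := (sq_abs y).symm
  have ht2 : t^2 = |t|^2 := (sq_abs t).symm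
  nlinarith


/-- the Chebyshev-U kernel. -/
theorem chebU_kernel (t x y : ℝ) (ht : |t| < 1) (hx : |x| < 2) (hy : |y| < 2) :
    HasSum (fun n : ℕ => t ^ n * chebU n (x / 2) * chebU n (y / 2))
      ((1 - t ^ 2) /
        ((1 - t ^ 2) ^ 2 - t * (1 + t ^ 2) * x * y + t ^ 2 * (x ^ 2 + y ^ 2))) := by
  set f : ℕ → ℝ := fun n => t ^ n * chebU n (x / 2) * chebU n (y / 2) with hf
  set D : ℝ := (1 - t ^ 2) ^ 2 - t * (1 + t ^ 2) * x * y + t ^ 2 * (x ^ 2 + y ^ 2) with hD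
  have hDpos : 0 < D := denom_pos t x y ht hx hy
  have hax : |x/2| < 1 := by rw [abs_div]; simp; linarith [abs_lt.mp hx]
  have hay : |y/2| < 1 := by rw [abs_div]; simp; linarith [abs_lt.mp hy]
  set Kx : ℝ := Real.sqrt (1/(1-|x/2|)) with hKx
  set Ky : ℝ := Real.sqrt (1/(1-|y/2|)) with hKy
  have hKx0 : 0 ≤ Kx := Real.sqrt_nonneg _
  have hKy0 : 0 ≤ Ky := Real.sqrt_nonneg _
  have hux : ∀ n, |chebU n (x/2)| ≤ Kx := chebU_abs_le _ hax
  have huy : ∀ n, |chebU n (y/2)| ≤ Ky := chebU_abs_le _ hay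
  have humx : ∀ n, |chebUm (x/2) n| ≤ Kx := chebUm_abs_le _ hax
  have humy : ∀ n, |chebUm (y/2) n| ≤ Ky := chebUm_abs_le _ hay
  -- summability
  have hfb : ∀ n, |f n| ≤ Kx * Ky * |t|^n := by
    intro n
    rw [hf]
    simp only
    rw [abs_mul, abs_mul, abs_pow]
    calc |t|^n * |chebU n (x/2)| * |chebU n (y/2)|
        ≤ |t|^n * Kx * Ky := by
          gcongr
          · exact hux n
          · exact huy n
    _ = Kx * Ky * |t|^n := by ring
  have hsum : Summable f := by
    apply Summable.of_abs
    apply Summable.of_nonneg_of_le (fun n => abs_nonneg _) hfb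
    exact (summable_geometric_of_lt_one (abs_nonneg t) ht).mul_left _
  -- E tends to 0
  have hEb : ∀ n, ‖kerE t x y n‖ ≤ (|1-t^2| + |t*(t*y-x)| + |t*(t*x-y)| + |t*(1-t^2)|) * (Kx*Ky) * |t|^n := by
    intro n
    have h3 : ∀ (c p q : ℝ), |p| ≤ Kx → |q| ≤ Ky → |c*p*q| ≤ |c| * (Kx * Ky) := by
      intro c p q hp hq
      rw [abs_mul, abs_mul, mul_assoc]
      exact mul_le_mul_of_nonneg_left (mul_le_mul hp hq (abs_nonneg q) hKx0) (abs_nonneg c)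
    set a1 := (1-t^2) * chebU n (x/2) * chebU n (y/2) with ha1
    set a2 := t*(t*y - x) * chebU n (x/2) * chebUm (y/2) n with ha2
    set a3 := t*(t*x - y) * chebUm (x/2) n * chebU n (y/2) with ha3
    set a4 := t*(1-t^2) * chebUm (x/2) n * chebUm (y/2) n with ha4
    have hb1 : |a1| ≤ |1-t^2| * (Kx*Ky) := h3 _ _ _ (hux n) (huy n)
    have hb2 : |a2| ≤ |t*(t*y-x)| * (Kx*Ky) := h3 _ _ _ (hux n) (humy n)
    have hb3 : |a3| ≤ |t*(t*x-y)| * (Kx*Ky) := h3 _ _ _ (humx n) (huy n)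
    have hb4 : |a4| ≤ |t*(1-t^2)| * (Kx*Ky) := h3 _ _ _ (humx n) (humy n)
    have habs : |a1 + a2 + a3 + a4| ≤ |a1| + |a2| + |a3| + |a4| := by
      have h5 := abs_add_le (a1+a2+a3) a4
      have h6 := abs_add_three a1 a2 a3
      linarith
    have hkn : ‖kerE t x y n‖ = |t|^n * |a1 + a2 + a3 + a4| := by
      rw [Real.norm_eq_abs, kerE, abs_mul, abs_pow, ha1, ha2, ha3, ha4]
    rw [hkn, mul_comm ((|1-t^2| + |t*(t*y-x)| + |t*(t*x-y)| + |t*(1-t^2)|) * (Kx*Ky)) (|t|^n)]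
    have h7 : |a1 + a2 + a3 + a4| ≤ (|1-t^2| + |t*(t*y-x)| + |t*(t*x-y)| + |t*(1-t^2)|) * (Kx*Ky) := by
      rw [add_mul, add_mul, add_mul]; linarith
    exact mul_le_mul_of_nonneg_left h7 (by positivity)
  have hE0 : Filter.Tendsto (fun n => kerE t x y n) Filter.atTop (nhds 0) := by
    apply squeeze_zero_norm hEb
    have := tendsto_pow_atTop_nhds_zero_of_lt_one (abs_nonneg t) ht
    convert this.const_mul ((|1-t^2| + |t*(t*y-x)| + |t*(t*x-y)| + |t*(1-t^2)|) * (Kx*Ky)) using 1 <;> simp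
  -- partial sums
  have hpsum : ∀ N, ∑ k ∈ Finset.range N, f k = (kerE t x y 0 - kerE t x y N) / D := by
    intro N
    rw [eq_div_iff hDpos.ne', ← Finset.sum_range_sub' (kerE t x y) N]
    rw [Finset.sum_mul]
    apply Finset.sum_congr rfl
    intro k _
    rw [kerE_step t x y k]
    ring
  have hE00 : kerE t x y 0 = 1 - t^2 := by simp [kerE, chebU, chebUm]
  have h2 : Filter.Tendsto (fun N => ∑ k ∈ Finset.range N, f k) Filter.atTop (nhds ((1-t^2)/D)) := by
    simp only [hpsum]
    have : Filter.Tendsto (fun N => (kerE t x y 0 - kerE t x y N) / D) Filter.atTop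
        (nhds ((kerE t x y 0 - 0)/D)) := (Filter.Tendsto.const_sub _ hE0).div_const D
    simpa [hE00] using this
  have h1 := hsum.hasSum.tendsto_sum_nat
  have := tendsto_nhds_unique h1 h2
  rw [← this]
  exact hsum.hasSum
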